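/- Let p be an odd prime, m ≥ 2, and α ∈ F_p with α ≠ 0. For every a ∈ F_{p^m} not lying in the prime subfield F_p and every β ∈ F_p, the number of d ∈ D(α) with Tr(a·d) = β equals p^{m-2}; i.e., every symbol of F_p occurs exactly p^{m-2} times in the codeword c(a). -/

import Mathlib

/-- Let `p` be an odd prime, `m ≥ 2`, and `α ∈ F_p` nonzero. For every `a ∈ F_{p^m}` not in
the prime subfield and every `β ∈ F_p`, the number of `d ∈ D(α)` with `Tr(a·d) = β` equals
`p^(m-2)`. -/
theorem composition_CDalpha
    (p : ℕ) [Fact p.Prime] (hp2 : p ≠ 2) (m : ℕ) (hm : 2 ≤ m)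
    (F : Type*) [Field F] [Fintype F] [DecidableEq F] [Algebra (ZMod p) F]
    (hcard : Fintype.card F = p ^ m) (α : ZMod p) (hα : α ≠ 0)
    (a : F) (ha : a ∉ Set.range (algebraMap (ZMod p) F)) (β : ZMod p) :
    (Finset.univ.filter fun d : F =>
        (d ≠ 0 ∧ Algebra.trace (ZMod p) F d = α) ∧
          Algebra.trace (ZMod p) F (a * d) = β).card = p ^ (m - 2) := by
  classical
  set T := Algebra.trace (ZMod p) F with hT
  -- nondegeneracy
  have hnd : ∀ x : F, (∀ d : F, T (x * d) = 0) → x = 0 := by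
    intro x hx
    exact (traceForm_nondegenerate (ZMod p) F).1 x (fun d => hx d)
  -- trace is nonzero: get e with T e = 1
  have hTne : T ≠ 0 := Algebra.trace_ne_zero (ZMod p) F
  obtain ⟨z, hz⟩ : ∃ z : F, T z ≠ 0 := by
    by_contra h
    push_neg at h
    exact hTne (LinearMap.ext fun x => h x)
  obtain ⟨e, hTe⟩ : ∃ e : F, T e = 1 :=
    ⟨(T z)⁻¹ • z, by rw [map_smul, smul_eq_mul, inv_mul_cancel₀ hz]⟩
  -- there is k with T k = 0 and T (a*k) ≠ 0
  obtain ⟨k, hk0, hkn⟩ : ∃ k : F, T k = 0 ∧ T (a * k) ≠ 0 := by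
    by_contra h
    push_neg at h
    set c : ZMod p := T (a * e) with hc
    apply ha
    refine ⟨c, ?_⟩
    have key : a - algebraMap (ZMod p) F c = 0 := by
      apply hnd
      intro d
      have h1 : T (d - T d • e) = 0 := by
        rw [map_sub, map_smul, hTe, smul_eq_mul, mul_one, sub_self]
      have h2 : T (a * (d - T d • e)) = 0 := h _ h1
      have h3 : T (a * d) = T d * c := by
        rw [mul_sub, map_sub, sub_eq_zero] at h2
        rw [h2, mul_smul_comm, map_smul, smul_eq_mul, hc]
      rw [sub_mul, map_sub, h3, Algebra.algebraMap_eq_smul_one, smul_mul_assoc,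
        one_mul, map_smul, smul_eq_mul, mul_comm, sub_self]
    have := sub_eq_zero.mp key
    exact this.symm
  -- the linear map L
  set L : F →ₗ[ZMod p] ZMod p × ZMod p :=
    LinearMap.prod T (T ∘ₗ LinearMap.mulLeft (ZMod p) a) with hL
  have hLapply : ∀ d : F, L d = (T d, T (a * d)) := fun d => rfl
  -- L is surjective
  have hsurj : Function.Surjective L := by
    intro ⟨x, y⟩
    refine ⟨x • e + ((y - x * T (a * e)) * (T (a * k))⁻¹) • k, ?_⟩
    have h1 : T (x • e + ((y - x * T (a * e)) * (T (a * k))⁻¹) • k) = x := by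
      rw [map_add, map_smul, map_smul, hTe, hk0, smul_eq_mul, mul_one, smul_zero, add_zero]
    have h2 : T (a * (x • e + ((y - x * T (a * e)) * (T (a * k))⁻¹) • k)) = y := by
      rw [mul_add, map_add, mul_smul_comm, mul_smul_comm, map_smul, map_smul,
        smul_eq_mul, smul_eq_mul, mul_assoc, inv_mul_cancel₀ hkn, mul_one]
      ring
    rw [hLapply]
    exact Prod.ext h1 h2
  -- cardinality of the kernel
  have hcard2 : Nat.card (ZMod p × ZMod p) = p ^ 2 := by
    simp [Nat.card_eq_fintype_card, Fintype.card_prod, ZMod.card, sq]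
  have hquot : Nat.card (F ⧸ LinearMap.ker L) = p ^ 2 := by
    rw [← hcard2]
    exact Nat.card_congr (L.quotKerEquivOfSurjective hsurj).toEquiv
  have hker : Nat.card (LinearMap.ker L) = p ^ (m - 2) := by
    have h1 : Nat.card (LinearMap.ker L) * Nat.card (F ⧸ LinearMap.ker L)
        = Nat.card F := Submodule.card_eq_card_quotient_mul_card (LinearMap.ker L) |>.symm
    simp only [Nat.card_eq_fintype_card] at hquot h1 ⊢
    rw [hquot, hcard] at h1
    have h2 : p ^ m = p ^ 2 * p ^ (m - 2) := by
      rw [← pow_add]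
      congr 1
      omega
    have hp : 0 < p ^ 2 := pow_pos (Fact.out (p := p.Prime)).pos 2
    have h3 : p ^ 2 * Fintype.card (LinearMap.ker L) = p ^ 2 * p ^ (m - 2) := by
      rw [mul_comm, h1, h2]
    exact Nat.eq_of_mul_eq_mul_left hp h3
  -- a point in the fiber
  obtain ⟨d₀, hd₀⟩ := hsurj (α, β)
  -- bijection between the fiber and the kernel
  have hfib : (Finset.univ.filter fun d : F =>
        (d ≠ 0 ∧ T d = α) ∧ T (a * d) = β).card
      = Nat.card (LinearMap.ker L) := by
    rw [Nat.card_eq_fintype_card, ← Fintype.card_subtype]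
    refine Fintype.card_congr ?_
    refine
      { toFun := fun d => ⟨d.1 - d₀, by
          obtain ⟨⟨-, h2⟩, h3⟩ := d.2
          rw [LinearMap.mem_ker, map_sub, hd₀, hLapply, h2, h3, sub_self]⟩
        invFun := fun x => ⟨x.1 + d₀, by
          have hx := x.2
          rw [LinearMap.mem_ker] at hx
          have hLx : L (x.1 + d₀) = (α, β) := by rw [map_add, hx, hd₀, zero_add]
          rw [hLapply] at hLx
          have h1 : T (x.1 + d₀) = α := congrArg Prod.fst hLx
          have h2 : T (a * (x.1 + d₀)) = β := congrArg Prod.snd hLx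
          refine ⟨⟨?_, h1⟩, h2⟩
          intro h0
          rw [h0, map_zero] at h1
          exact hα h1.symm⟩
        left_inv := fun d => Subtype.ext (by simp)
        right_inv := fun x => Subtype.ext (by simp) }
  rw [hfib, hker]
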